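/- For an elementary abelian 2-group V and any natural number n, the inclusion 2^n · I(V) ⊆ I(V)^{n+1} holds, where I(V) is the augmentation ideal of the integral group ring Z[V]. -/

import Mathlib

/-- The augmentation map of the integral group ring `ℤ[V]`. -/
noncomputable def aug (V : Type) [AddCommGroup V] :
    AddMonoidAlgebra ℤ V →ₐ[ℤ] ℤ :=
  AddMonoidAlgebra.lift ℤ ℤ V 1

/-- The augmentation ideal `I(V)` of `ℤ[V]`. -/
noncomputable def augIdeal (V : Type) [AddCommGroup V] :
    Ideal (AddMonoidAlgebra ℤ V) :=
  RingHom.ker (aug V).toRingHom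

lemma aug_single (V : Type) [AddCommGroup V] (a : V) (b : ℤ) :
    aug V (AddMonoidAlgebra.single a b) = b := by
  simp [aug]

lemma gen_mem (V : Type) [AddCommGroup V] (v : V) :
    (AddMonoidAlgebra.single v (1:ℤ) - 1) ∈ augIdeal V := by
  simp [augIdeal, RingHom.mem_ker, map_sub, aug_single]

lemma key (V : Type) [AddCommGroup V] [Module (ZMod 2) V] (n : ℕ) (v : V) :
    (2 : AddMonoidAlgebra ℤ V) ^ n * (AddMonoidAlgebra.single v (1:ℤ) - 1)
      ∈ (augIdeal V) ^ (n + 1) := by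
  induction n with
  | zero => simpa using gen_mem V v
  | succ n ih =>
    have hv : v + v = 0 := by
      have h2 : (2 : ZMod 2) • v = 0 := by
        rw [show (2 : ZMod 2) = 0 from rfl, zero_smul]
      rwa [two_smul] at h2
    set g : AddMonoidAlgebra ℤ V := AddMonoidAlgebra.single v (1:ℤ) - 1 with hg
    have h1 : AddMonoidAlgebra.single v (1:ℤ) * AddMonoidAlgebra.single v (1:ℤ)
        = 1 := by
      rw [AddMonoidAlgebra.single_mul_single, hv]
      simp [AddMonoidAlgebra.one_def]
    have hsq : (2 : AddMonoidAlgebra ℤ V) * g = -(g * g) := by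
      have hgg : g * g = AddMonoidAlgebra.single v (1:ℤ) * AddMonoidAlgebra.single v (1:ℤ)
          - 2 * AddMonoidAlgebra.single v (1:ℤ) + 1 := by
        rw [hg]; ring
      rw [hgg, h1, hg]; ring
    have heq : (2 : AddMonoidAlgebra ℤ V) ^ (n + 1) * g
        = -(((2 : AddMonoidAlgebra ℤ V) ^ n * g) * g) := by
      linear_combination ((2 : AddMonoidAlgebra ℤ V) ^ n) * hsq
    rw [heq, pow_succ]
    exact neg_mem (Ideal.mul_mem_mul ih (gen_mem V v))

lemma span_ge (V : Type) [AddCommGroup V] :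
    augIdeal V ≤ Ideal.span (Set.range fun v : V => AddMonoidAlgebra.single v (1:ℤ) - 1) := by
  intro x hx
  set S := Ideal.span (Set.range fun v : V => AddMonoidAlgebra.single v (1:ℤ) - 1) with hS
  have hx0 : aug V x = 0 := hx
  have main : ∀ f : AddMonoidAlgebra ℤ V,
      f - AddMonoidAlgebra.single (0:V) (aug V f) ∈ S := by
    intro f
    induction f using AddMonoidAlgebra.induction_on with
    | of a =>
      have : aug V (AddMonoidAlgebra.of ℤ V (Multiplicative.ofAdd a)) = 1 := by
        simp [AddMonoidAlgebra.of_apply, aug_single]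
      rw [this]
      have h1 : AddMonoidAlgebra.single (0:V) (1:ℤ) = (1 : AddMonoidAlgebra ℤ V) := rfl
      rw [h1, AddMonoidAlgebra.of_apply]
      exact Ideal.subset_span ⟨Multiplicative.toAdd a, rfl⟩
    | add f g ihf ihg =>
      have : (f + g) - AddMonoidAlgebra.single (0:V) (aug V (f + g))
          = (f - AddMonoidAlgebra.single (0:V) (aug V f))
            + (g - AddMonoidAlgebra.single (0:V) (aug V g)) := by
        rw [map_add, AddMonoidAlgebra.single_add]
        abel
      rw [this]
      exact add_mem ihf ihg
    | smul r f ihf =>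
      have : (r • f) - AddMonoidAlgebra.single (0:V) (aug V (r • f))
          = (r : AddMonoidAlgebra ℤ V) * (f - AddMonoidAlgebra.single (0:V) (aug V f)) := by
        rw [map_smul, smul_eq_mul, mul_sub]
        congr 1
        · rw [← zsmul_eq_mul]
        · rw [← zsmul_eq_mul, AddMonoidAlgebra.smul_single']
      rw [this]
      exact Ideal.mul_mem_left _ _ ihf
  have := main x
  rw [hx0] at this
  simpa using this

/-- For an elementary abelian 2-group `V` and `n : ℕ`, one has `2^n · I(V) ⊆ I(V)^(n+1)`. -/
theorem stmt1 (V : Type) [AddCommGroup V] [Module (ZMod 2) V] (n : ℕ) :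
    ∀ x ∈ augIdeal V, (2 : AddMonoidAlgebra ℤ V) ^ n * x ∈ (augIdeal V) ^ (n + 1) := by
  intro x hx
  have hx' := span_ge V hx
  clear hx
  induction hx' using Submodule.span_induction with
  | mem g hg =>
    obtain ⟨v, rfl⟩ := hg
    exact key V n v
  | zero => simp
  | add a b _ _ iha ihb =>
    rw [mul_add]; exact add_mem iha ihb
  | smul a x _ ihx =>
    rw [smul_eq_mul, mul_left_comm]
    exact Ideal.mul_mem_left _ _ ihx
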